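/- Let V be a real Hilbert space, W ⊆ V a dense subspace, and T : V → V bounded, self-adjoint, positive-definite, invertible. Then for every f ∈ V, ⟨T⁻¹ f, f⟩ = sup over nonzero w ∈ W of ⟨w, f⟩² / ⟨T w, w⟩. -/

import Mathlib

open scoped RealInnerProductSpace

/-- Variational characterization of `⟪T⁻¹ f, f⟫` with the supremum taken over a dense
subspace `W` of the real Hilbert space `V`. -/
theorem stmt2 {V : Type*} [NormedAddCommGroup V] [InnerProductSpace ℝ V] [CompleteSpace V]
    (W : Submodule ℝ V) (hW : Dense (W : Set V))
    (T Tinv : V →L[ℝ] V)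
    (hinv₁ : ∀ x, T (Tinv x) = x) (hinv₂ : ∀ x, Tinv (T x) = x)
    (hsym : ∀ u v : V, ⟪T u, v⟫ = ⟪u, T v⟫)
    (hpos : ∀ v : V, v ≠ 0 → 0 < ⟪T v, v⟫)
    (f : V) :
    ⟪Tinv f, f⟫
      = ⨆ w : {w : V // w ∈ W ∧ w ≠ 0}, (⟪(w : V), f⟫) ^ 2 / ⟪T w, (w : V)⟫ := by
  set g := Tinv f with hg
  have hTg : T g = f := hinv₁ f
  by_cases hg0 : g = 0
  · have hf0 : f = 0 := by rw [← hTg, hg0, map_zero]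
    subst hf0
    simp only [inner_zero_right, ne_eq, zero_pow, zero_div, OfNat.ofNat_ne_zero,
      not_false_iff]
    rcases isEmpty_or_nonempty {w : V // w ∈ W ∧ w ≠ 0} with h | h
    · simp [Real.iSup_of_isEmpty]
    · rw [ciSup_const]
  · have hBnn : ∀ v : V, 0 ≤ ⟪T v, v⟫ := by
      intro v
      rcases eq_or_ne v 0 with rfl | hv
      · simp
      · exact (hpos v hv).le
    have hsymB : ∀ u v : V, ⟪T u, v⟫ = ⟪T v, u⟫ := fun u v => by
      rw [hsym, real_inner_comm]
    have hCS : ∀ v : V, ⟪T v, g⟫ ^ 2 ≤ ⟪T v, v⟫ * ⟪T g, g⟫ := by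
      intro v
      rcases eq_or_ne v 0 with rfl | hv
      · simp
      · have hvv := hpos v hv
        set t : ℝ := -⟪T v, g⟫ / ⟪T v, v⟫ with ht
        have h := hBnn (g + t • v)
        have expand : ⟪T (g + t • v), g + t • v⟫
            = ⟪T g, g⟫ + 2 * t * ⟪T v, g⟫ + t ^ 2 * ⟪T v, v⟫ := by
          simp only [map_add, map_smul, inner_add_left, inner_add_right,
            real_inner_smul_left, real_inner_smul_right]
          rw [hsymB g v]
          ring
        rw [expand, ht] at h
        have hb : ⟪T v, v⟫ ≠ 0 := ne_of_gt hvv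
        have hD : (0:ℝ) < ⟪T v, v⟫ * ⟪T v, v⟫ ^ 2 := by positivity
        field_simp at h
        nlinarith [h, hvv, sq_nonneg (⟪T v, v⟫ : ℝ)]
    have hgg : ⟪T g, g⟫ = ⟪g, f⟫ := by rw [hTg, real_inner_comm]
    have hc : 0 < ⟪g, f⟫ := by rw [← hgg]; exact hpos g hg0
    have hub : ∀ w : {w : V // w ∈ W ∧ w ≠ 0},
        ⟪(w : V), f⟫ ^ 2 / ⟪T w, (w : V)⟫ ≤ ⟪g, f⟫ := by
      rintro ⟨w, hwW, hw0⟩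
      have hwf : ⟪w, f⟫ = ⟪T w, g⟫ := by rw [← hTg, hsym]
      have hww := hpos w hw0
      rw [div_le_iff₀ hww]
      calc ⟪w, f⟫ ^ 2 = ⟪T w, g⟫ ^ 2 := by rw [hwf]
        _ ≤ ⟪T w, w⟫ * ⟪T g, g⟫ := hCS w
        _ = ⟪g, f⟫ * ⟪T w, w⟫ := by rw [hgg]; ring
    have hbdd : BddAbove (Set.range fun w : {w : V // w ∈ W ∧ w ≠ 0} =>
        ⟪(w : V), f⟫ ^ 2 / ⟪T w, (w : V)⟫) := by
      refine ⟨⟪g, f⟫, ?_⟩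
      rintro x ⟨w, rfl⟩
      exact hub w
    -- nonempty index
    obtain ⟨w₀, hw₀W, hw₀0⟩ := hW.exists_mem_open isOpen_compl_singleton ⟨g, hg0⟩
    haveI : Nonempty {w : V // w ∈ W ∧ w ≠ 0} := ⟨⟨w₀, hw₀W, hw₀0⟩⟩
    apply le_antisymm
    · -- ⟪g, f⟫ ≤ sup
      by_contra hcon
      push_neg at hcon
      set s : ℝ := ⨆ w : {w : V // w ∈ W ∧ w ≠ 0},
        ⟪(w : V), f⟫ ^ 2 / ⟪T w, (w : V)⟫ with hs
      have hcont : ContinuousAt (fun v : V => ⟪v, f⟫ ^ 2 / ⟪T v, v⟫) g := by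
        apply ContinuousAt.div
        · exact (((continuous_id.inner continuous_const).pow 2)).continuousAt
        · exact (T.continuous.inner continuous_id).continuousAt
        · rw [hgg]; exact ne_of_gt hc
      have hφg : (fun v : V => ⟪v, f⟫ ^ 2 / ⟪T v, v⟫) g = ⟪g, f⟫ := by
        simp only [hgg]
        field_simp
      have h1 : ∀ᶠ v in nhds g, s < ⟪v, f⟫ ^ 2 / ⟪T v, v⟫ := by
        have : s < (fun v : V => ⟪v, f⟫ ^ 2 / ⟪T v, v⟫) g := by rw [hφg]; exact hcon
        exact hcont.eventually_const_lt this
      have h2 : ∀ᶠ v in nhds g, v ≠ 0 := eventually_ne_nhds hg0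
      have hmem := (h1.and h2)
      have hcl : g ∈ closure (W : Set V) := hW g
      rw [mem_closure_iff_nhds] at hcl
      obtain ⟨w, hwU, hwW⟩ := hcl _ hmem
      have hle : ⟪w, f⟫ ^ 2 / ⟪T w, w⟫ ≤ s :=
        le_ciSup hbdd (⟨w, hwW, hwU.2⟩ : {w : V // w ∈ W ∧ w ≠ 0})
      exact absurd hle (not_le.mpr hwU.1)
    · exact ciSup_le hub
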